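/- The normalized Haar (Lebesgue) measure λ on the torus ℂ/Ω is invariant under every non-constant affine map t ↦ at + b with a·Ω ⊆ Ω, and if |a|² ≥ 2 this map is ergodic with respect to λ. -/

import Mathlib

open MeasureTheory Set Function Filter Topology

section Aux

variable (L : Submodule ℤ ℂ) [DiscreteTopology L] [IsZLattice ℝ L]

-- compactness of the torus
lemma aux_compact : CompactSpace (ℂ ⧸ L.toAddSubgroup) := by
  haveI : Module.Free ℤ L := ZLattice.module_free ℝ L
  haveI : Module.Finite ℤ L := ZLattice.module_finite ℝ L
  let b := Module.Free.chooseBasis ℤ L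
  let B := Module.Basis.ofZLatticeBasis ℝ L b
  have hbd : Bornology.IsBounded (closure (ZSpan.fundamentalDomain B)) :=
    (ZSpan.fundamentalDomain_isBounded B).closure
  have hK : IsCompact (closure (ZSpan.fundamentalDomain B)) :=
    Metric.isCompact_of_isClosed_isBounded isClosed_closure hbd
  constructor
  have himage : (QuotientAddGroup.mk : ℂ → ℂ ⧸ L.toAddSubgroup) ''
      closure (ZSpan.fundamentalDomain B) = Set.univ := by
    apply Set.eq_univ_of_forall
    intro y
    induction y using QuotientAddGroup.induction_on with
    | H t =>
      refine ⟨ZSpan.fract B t, subset_closure (ZSpan.fract_mem_fundamentalDomain B t), ?_⟩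
      apply QuotientAddGroup.eq.2
      have h1 : -(ZSpan.fract B t) + t = (ZSpan.floor B t : ℂ) := by
        rw [ZSpan.fract_apply]; ring
      rw [h1]
      have h2 : (ZSpan.floor B t : ℂ) ∈ Submodule.span ℤ (Set.range (B : _ → ℂ)) :=
        SetLike.coe_mem _
      exact (SetLike.ext_iff.1 (Module.Basis.ofZLatticeBasis_span ℝ L (b := b)) _).1 h2
  rw [← himage]
  exact hK.image continuous_quot_mk

lemma aux_t2 : T2Space (ℂ ⧸ L.toAddSubgroup) := by
  haveI : DiscreteTopology L.toAddSubgroup := inferInstanceAs (DiscreteTopology L)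
  haveI : IsClosed (L.toAddSubgroup : Set ℂ) := AddSubgroup.isClosed_of_discrete
  infer_instance

-- density of points with a^k * u ∈ L
lemma aux_dense (a : ℂ) (ha : 1 < ‖a‖) :
    Dense ((QuotientAddGroup.mk : ℂ → ℂ ⧸ L.toAddSubgroup) ''
      {u : ℂ | ∃ k : ℕ, a ^ k * u ∈ L}) := by
  haveI : Module.Free ℤ L := ZLattice.module_free ℝ L
  haveI : Module.Finite ℤ L := ZLattice.module_finite ℝ L
  let b := Module.Free.chooseBasis ℤ L
  let B := Module.Basis.ofZLatticeBasis ℝ L b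
  have ha0 : (0 : ℝ) < ‖a‖ := lt_trans one_pos ha
  intro y
  induction y using QuotientAddGroup.induction_on with
  | H t =>
    set M : ℝ := ∑ i, ‖B i‖ with hM
    -- the approximating sequence
    let u : ℕ → ℂ := fun k => t - ZSpan.fract B (a ^ k * t) / a ^ k
    have hak : ∀ k : ℕ, a ^ k ≠ 0 := fun k => pow_ne_zero k (by
      intro h; rw [h] at ha; simp at ha; linarith)
    have humem : ∀ k : ℕ, u k ∈ {u : ℂ | ∃ k : ℕ, a ^ k * u ∈ L} := by
      intro k
      refine ⟨k, ?_⟩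
      have hcancel : a ^ k * (ZSpan.fract B (a ^ k * t) / a ^ k) =
          ZSpan.fract B (a ^ k * t) := by
        rw [mul_comm]; exact div_mul_cancel₀ _ (hak k)
      have : a ^ k * u k = a ^ k * t - ZSpan.fract B (a ^ k * t) := by
        simp only [u]; rw [mul_sub, hcancel]
      rw [this]
      have h3 : a ^ k * t - ZSpan.fract B (a ^ k * t) = (ZSpan.floor B (a ^ k * t) : ℂ) := by
        rw [ZSpan.fract_apply]; ring
      rw [h3]
      have hfl : (ZSpan.floor B (a ^ k * t) : ℂ) ∈ Submodule.span ℤ (Set.range (B : _ → ℂ)) :=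
        SetLike.coe_mem _
      exact (SetLike.ext_iff.1 (Module.Basis.ofZLatticeBasis_span ℝ L (b := b)) _).1 hfl
    have hdist : ∀ k : ℕ, ‖u k - t‖ ≤ M / ‖a‖ ^ k := by
      intro k
      have : u k - t = -(ZSpan.fract B (a ^ k * t) / a ^ k) := by ring
      rw [this, norm_neg, norm_div]
      have h1 : ‖ZSpan.fract B (a ^ k * t)‖ ≤ M := ZSpan.norm_fract_le B _
      have h2 : ‖(a : ℂ) ^ k‖ = ‖a‖ ^ k := by
        rw [norm_pow]
      rw [h2]
      gcongr
    have hlim : Filter.Tendsto u Filter.atTop (nhds t) := by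
      rw [tendsto_iff_norm_sub_tendsto_zero]
      apply squeeze_zero (fun k => norm_nonneg _) hdist
      rw [show (0:ℝ) = M * 0 by ring]
      have : Filter.Tendsto (fun k : ℕ => (‖a‖ ^ k)⁻¹) Filter.atTop (nhds 0) :=
        tendsto_inv_atTop_zero.comp (tendsto_pow_atTop_atTop_of_one_lt ha)
      simpa [div_eq_mul_inv] using this.const_mul M
    have : Filter.Tendsto (fun k => (QuotientAddGroup.mk (u k) : ℂ ⧸ L.toAddSubgroup))
        Filter.atTop (nhds (QuotientAddGroup.mk t)) :=
      (continuous_quot_mk.tendsto t).comp hlim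
    exact mem_closure_of_tendsto this (Filter.Eventually.of_forall fun k =>
      Set.mem_image_of_mem _ (humem k))

end Aux

/-- **Invariance and ergodicity of the canonical measure** (§2).
Let `Ω ⊂ ℂ` be a lattice and `λ` the normalized Haar (Lebesgue) probability measure on the
torus `ℂ/Ω`.  Every non-constant affine map `t ↦ at + b` with `a·Ω ⊆ Ω` (i.e. `a ≠ 0`)
induces a self-map `f` of `ℂ/Ω` preserving `λ`, and if `|a|² ≥ 2` then `f` is ergodic with
respect to `λ`. -/
theorem torus_haar_invariant_and_ergodic (L : Submodule ℤ ℂ) [DiscreteTopology L]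
    [IsZLattice ℝ L]
    [MeasurableSpace (ℂ ⧸ L.toAddSubgroup)] [BorelSpace (ℂ ⧸ L.toAddSubgroup)]
    (μ : Measure (ℂ ⧸ L.toAddSubgroup)) [μ.IsAddHaarMeasure] [IsProbabilityMeasure μ]
    (a b : ℂ) (ha : a ≠ 0) (haL : ∀ z ∈ L, a * z ∈ L)
    (f : ℂ ⧸ L.toAddSubgroup → ℂ ⧸ L.toAddSubgroup)
    (hf : ∀ t : ℂ, f (QuotientAddGroup.mk t) = QuotientAddGroup.mk (a * t + b)) :
    MeasurePreserving f μ μ ∧ (2 ≤ ‖a‖ ^ 2 → Ergodic f μ) := by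
  haveI := aux_compact L
  haveI := aux_t2 L
  -- the group endomorphism induced by multiplication by `a`
  let φ : (ℂ ⧸ L.toAddSubgroup) →+ (ℂ ⧸ L.toAddSubgroup) := QuotientAddGroup.map L.toAddSubgroup L.toAddSubgroup
    (AddMonoidHom.mulLeft a) (fun z hz => haL z hz)
  have hφmk : ∀ t : ℂ, φ (QuotientAddGroup.mk t) = QuotientAddGroup.mk (a * t) := fun t => rfl
  have hφcont : Continuous φ := by
    rw [(QuotientAddGroup.isQuotientMap_mk L.toAddSubgroup).continuous_iff]
    have : (φ ∘ QuotientAddGroup.mk) = fun t : ℂ => QuotientAddGroup.mk (a * t) := by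
      funext t; exact hφmk t
    rw [this]
    exact continuous_quot_mk.comp (continuous_const.mul continuous_id)
  have hφsurj : Function.Surjective φ := by
    intro y
    induction y using QuotientAddGroup.induction_on with
    | H z => exact ⟨QuotientAddGroup.mk (a⁻¹ * z), by rw [hφmk, mul_inv_cancel_left₀ ha]⟩
  have hφmap : μ.map φ = μ := by
    haveI : (μ.map φ).IsAddHaarMeasure :=
      Measure.isAddHaarMeasure_map_of_isFiniteMeasure μ φ hφcont hφsurj
    haveI : IsProbabilityMeasure (μ.map φ) :=
      Measure.isProbabilityMeasure_map hφcont.measurable.aemeasurable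
    exact Measure.isAddHaarMeasure_eq_of_isProbabilityMeasure _ μ
  have hφmp : MeasurePreserving φ μ μ := ⟨hφcont.measurable, hφmap⟩
  have hfeq : f = fun y => φ y + QuotientAddGroup.mk b := by
    funext y
    induction y using QuotientAddGroup.induction_on with
    | H t => rw [hf t, hφmk]; rfl
  have hmp : MeasurePreserving f μ μ := by
    rw [hfeq]
    exact (measurePreserving_add_right μ _).comp hφmp
  refine ⟨hmp, fun ha2 => ?_⟩
  have haa : 1 < ‖a‖ := by nlinarith [norm_nonneg a]
  refine ⟨hmp, ⟨fun s hs hs' => ?_⟩⟩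
  rw [eventuallyConst_set']
  -- the iterates of f
  have hiter : ∀ (k : ℕ) (t u : ℂ), f^[k] (QuotientAddGroup.mk (t + u)) =
      f^[k] (QuotientAddGroup.mk t) + QuotientAddGroup.mk (a ^ k * u) := by
    intro k
    induction k with
    | zero => intro t u; simp [QuotientAddGroup.mk_add]
    | succ k ih =>
      intro t u
      rw [Function.iterate_succ_apply, Function.iterate_succ_apply, hf, hf,
        show a * (t + u) + b = (a * t + b) + a * u by ring, ih,
        show a ^ k * (a * u) = a ^ (k + 1) * u by ring]
  -- exact invariance under translations with a^k * u ∈ L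
  have hinv : ∀ u : ℂ, (∃ k : ℕ, a ^ k * u ∈ L) →
      ((QuotientAddGroup.mk u + ·) ⁻¹' s : Set (ℂ ⧸ L.toAddSubgroup)) = s := by
    have hskgen : ∀ k : ℕ, f^[k] ⁻¹' s = s := by
      intro k
      induction k with
      | zero => simp
      | succ k ih => rw [Function.iterate_succ, Set.preimage_comp, ih, hs']
    rintro u ⟨k, hk⟩
    have hsk : f^[k] ⁻¹' s = s := hskgen k
    have key : ∀ y : ℂ ⧸ L.toAddSubgroup, f^[k] (QuotientAddGroup.mk u + y) = f^[k] y := by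
      intro y
      induction y using QuotientAddGroup.induction_on with
      | H t =>
        rw [← QuotientAddGroup.mk_add, add_comm u t, hiter k t u,
          show (QuotientAddGroup.mk (a ^ k * u) : ℂ ⧸ L.toAddSubgroup) = 0 from
            (QuotientAddGroup.eq_zero_iff _).2 hk, add_zero]
    ext y
    constructor
    · intro hy
      have : f^[k] (QuotientAddGroup.mk u + y) ∈ s := by rw [← hsk] at hy; exact hy
      rw [key y] at this
      rw [← hsk]; exact this
    · intro hy
      have : f^[k] y ∈ s := by rw [← hsk] at hy; exact hy
      rw [← key y] at this
      show QuotientAddGroup.mk u + y ∈ s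
      rw [← hsk]; exact this
  -- the a.e. stabilizer is closed, hence everything by density
  have hstab : ∀ z : ℂ ⧸ L.toAddSubgroup, ((z + ·) ⁻¹' s : Set (ℂ ⧸ L.toAddSubgroup)) =ᵐ[μ] s := by
    have hZclosed : IsClosed {z : ℂ ⧸ L.toAddSubgroup | ((z + ·) ⁻¹' s : Set (ℂ ⧸ L.toAddSubgroup)) =ᵐ[μ] s} := by
      have hFc : Continuous fun z : ℂ ⧸ L.toAddSubgroup => ContinuousMap.addLeft z := by
        apply ContinuousMap.continuous_of_continuous_uncurry
        exact continuous_fst.add continuous_snd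
      exact isClosed_setOf_preimage_ae_eq hFc
        (fun z => measurePreserving_add_left μ z) s hs.nullMeasurableSet (measure_ne_top μ s)
    have hsub : (QuotientAddGroup.mk : ℂ → ℂ ⧸ L.toAddSubgroup) '' {u : ℂ | ∃ k : ℕ, a ^ k * u ∈ L} ⊆
        {z : ℂ ⧸ L.toAddSubgroup | ((z + ·) ⁻¹' s : Set (ℂ ⧸ L.toAddSubgroup)) =ᵐ[μ] s} := by
      rintro - ⟨u, hu, rfl⟩
      show ((QuotientAddGroup.mk u + ·) ⁻¹' s : Set (ℂ ⧸ L.toAddSubgroup)) =ᵐ[μ] s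
      rw [hinv u hu]
      exact Filter.EventuallyEq.rfl
    have hZd : Dense {z : ℂ ⧸ L.toAddSubgroup | ((z + ·) ⁻¹' s : Set (ℂ ⧸ L.toAddSubgroup)) =ᵐ[μ] s} :=
      (aux_dense L a haa).mono hsub
    exact fun z => hZclosed.closure_subset (hZd z)
  -- endgame: Haar uniqueness
  let ν := μ.restrict s
  haveI : ν.IsAddLeftInvariant := by
    constructor
    intro z
    ext A hA
    rw [Measure.map_apply (measurable_const_add z) hA,
      Measure.restrict_apply (measurable_const_add z hA), Measure.restrict_apply hA]
    calc μ ((z + ·) ⁻¹' A ∩ s) = μ ((z + ·) ⁻¹' A ∩ (z + ·) ⁻¹' s) :=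
          measure_congr ((Filter.EventuallyEq.refl _ _).inter (hstab z).symm)
      _ = μ ((z + ·) ⁻¹' (A ∩ s)) := by rw [Set.preimage_inter]
      _ = μ (A ∩ s) := measure_preimage_add μ z _
  have h1 := Measure.measure_isAddInvariant_eq_smul_of_isCompact_closure ν μ
    (s := Set.univ) isClosed_closure.isCompact
  have h2 := Measure.measure_isAddInvariant_eq_smul_of_isCompact_closure ν μ
    (s := s) isClosed_closure.isCompact
  rw [Measure.restrict_apply_univ, measure_univ, ENNReal.smul_def, smul_eq_mul, mul_one] at h1
  rw [Measure.restrict_apply_self, ENNReal.smul_def, smul_eq_mul, ← h1] at h2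
  -- h2 : μ s = μ s * μ s
  rcases eq_or_ne (μ s) 0 with h0 | h0
  · exact Or.inl (ae_eq_empty.2 h0)
  · right
    rw [ae_eq_univ_iff_measure_eq hs.nullMeasurableSet, measure_univ]
    have hne : μ s ≠ ⊤ := measure_ne_top μ s
    calc μ s = (μ s)⁻¹ * μ s * μ s := by
          rw [ENNReal.inv_mul_cancel h0 hne, one_mul]
      _ = (μ s)⁻¹ * (μ s * μ s) := by rw [mul_assoc]
      _ = (μ s)⁻¹ * μ s := by rw [← h2]
      _ = 1 := ENNReal.inv_mul_cancel h0 hne
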